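/- Let X be an ideal of L⁰(Ω, Σ, ℙ) and Y an order closed sublattice of X containing the constant function 1. Then every f ∈ Y is measurable with respect to the σ-algebra G = {A ∈ Σ : χ_A ∈ Y}; in particular, for each real r the set {f > r} belongs to G. -/

import Mathlib

open MeasureTheory Filter

universe u

variable {Ω : Type u}

/-- An ideal (solid subspace) of `L⁰`. -/
def IsIdealL0 {m0 : MeasurableSpace Ω} {μ : Measure Ω} (X : Submodule ℝ (Ω →ₘ[μ] ℝ)) : Prop :=
  ∀ x y : Ω →ₘ[μ] ℝ, |x| ≤ |y| → y ∈ X → x ∈ X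

/-- Order convergence of a net `y` to `x` within the subspace `X` of `L⁰`: there is a net
`z` in `X`, antitone, with infimum `0` relative to `X`, eventually dominating `|y a - x|`. -/
def OrderConvNetIn {m0 : MeasurableSpace Ω} {μ : Measure Ω} (X : Submodule ℝ (Ω →ₘ[μ] ℝ))
    {ι : Type*} [Preorder ι] (y : ι → (Ω →ₘ[μ] ℝ)) (x : Ω →ₘ[μ] ℝ) : Prop :=
  ∃ z : ι → (Ω →ₘ[μ] ℝ), (∀ a, z a ∈ X) ∧ Antitone z ∧ (∀ a, 0 ≤ z a) ∧
    (∀ h ∈ X, (∀ a, h ≤ z a) → h ≤ 0) ∧ ∀ᶠ a in atTop, |y a - x| ≤ z a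

/-- A subset `Y` of `X ⊆ L⁰` is order closed in `X` if it contains the limit of any net of
its elements order-converging (within `X`) to an element of `X`. -/
def OrderClosedIn {m0 : MeasurableSpace Ω} {μ : Measure Ω} (X : Submodule ℝ (Ω →ₘ[μ] ℝ))
    (Y : Set (Ω →ₘ[μ] ℝ)) : Prop :=
  ∀ (ι : Type u) (_ : Preorder ι) (_ : IsDirected ι (· ≤ ·)) (_ : Nonempty ι)
    (y : ι → (Ω →ₘ[μ] ℝ)) (x : Ω →ₘ[μ] ℝ),
    (∀ a, y a ∈ Y) → x ∈ X → OrderConvNetIn X y x → x ∈ Y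

/-- The indicator of a measurable set, as an element of `L⁰`. -/
noncomputable def chiL0 {m0 : MeasurableSpace Ω} (μ : Measure Ω) (A : Set Ω)
    (hA : MeasurableSet A) : Ω →ₘ[μ] ℝ :=
  AEEqFun.mk (A.indicator fun _ => (1 : ℝ))
    ((measurable_const.indicator hA).aestronglyMeasurable)

section Aux

variable {m0 : MeasurableSpace Ω} {μ : Measure Ω}

lemma aeeq_sup_eq (a b : Ω →ₘ[μ] ℝ) : a ⊔ b = (2⁻¹ : ℝ) • (a + b + |a - b|) := by
  apply AEEqFun.ext
  filter_upwards [AEEqFun.coeFn_sup a b, AEEqFun.coeFn_smul (2⁻¹ : ℝ) (a + b + |a - b|),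
    AEEqFun.coeFn_add (a + b) |a - b|, AEEqFun.coeFn_add a b, AEEqFun.coeFn_abs (a - b),
    AEEqFun.coeFn_sub a b] with ω h1 h2 h3 h4 h5 h6
  rw [h1, h2, Pi.smul_apply, h3, Pi.add_apply, h4, Pi.add_apply, h5, h6, Pi.sub_apply,
    smul_eq_mul]
  rcases le_total (a ω) (b ω) with h | h
  · rw [max_eq_right h, abs_of_nonpos (by linarith)]; ring
  · rw [max_eq_left h, abs_of_nonneg (by linarith)]; ring

lemma aeeq_inf_eq (a b : Ω →ₘ[μ] ℝ) : a ⊓ b = (2⁻¹ : ℝ) • (a + b - |a - b|) := by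
  apply AEEqFun.ext
  filter_upwards [AEEqFun.coeFn_inf a b, AEEqFun.coeFn_smul (2⁻¹ : ℝ) (a + b - |a - b|),
    AEEqFun.coeFn_sub (a + b) |a - b|, AEEqFun.coeFn_add a b, AEEqFun.coeFn_abs (a - b),
    AEEqFun.coeFn_sub a b] with ω h1 h2 h3 h4 h5 h6
  rw [h1, h2, Pi.smul_apply, h3, Pi.sub_apply, h4, Pi.add_apply, h5, h6, Pi.sub_apply,
    smul_eq_mul]
  rcases le_total (a ω) (b ω) with h | h
  · rw [min_eq_left h, abs_of_nonpos (by linarith)]; ring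
  · rw [min_eq_right h, abs_of_nonneg (by linarith)]; ring

lemma sup_memY (Y : Submodule ℝ (Ω →ₘ[μ] ℝ)) (hsub : ∀ y ∈ Y, |y| ∈ Y)
    {a b : Ω →ₘ[μ] ℝ} (ha : a ∈ Y) (hb : b ∈ Y) : a ⊔ b ∈ Y := by
  rw [aeeq_sup_eq]
  exact Y.smul_mem _ (Y.add_mem (Y.add_mem ha hb) (hsub _ (Y.sub_mem ha hb)))

lemma inf_memY (Y : Submodule ℝ (Ω →ₘ[μ] ℝ)) (hsub : ∀ y ∈ Y, |y| ∈ Y)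
    {a b : Ω →ₘ[μ] ℝ} (ha : a ∈ Y) (hb : b ∈ Y) : a ⊓ b ∈ Y := by
  rw [aeeq_inf_eq]
  exact Y.smul_mem _ (Y.sub_mem (Y.add_mem ha hb) (hsub _ (Y.sub_mem ha hb)))

end Aux

/-- If `Y` is an order closed sublattice of an ideal `X` of `L⁰` with `1 ∈ Y`,
then every `f ∈ Y` is measurable with respect to the σ-algebra
`G = {A ∈ Σ : χ_A ∈ Y}`; in particular `{f > r} ∈ G` for every real `r`. -/
theorem mem_measurable_wrt_indicator_sigmaAlgebra
    {m0 : MeasurableSpace Ω} {μ : Measure Ω} [IsProbabilityMeasure μ]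
    (X : Submodule ℝ (Ω →ₘ[μ] ℝ)) (hX : IsIdealL0 X)
    (Y : Submodule ℝ (Ω →ₘ[μ] ℝ)) (hYX : (Y : Set (Ω →ₘ[μ] ℝ)) ⊆ X)
    (hsub : ∀ y ∈ Y, |y| ∈ Y) (h1 : (1 : Ω →ₘ[μ] ℝ) ∈ Y)
    (hclosed : OrderClosedIn X (Y : Set (Ω →ₘ[μ] ℝ)))
    (f : Ω →ₘ[μ] ℝ) (hf : f ∈ Y) :
    Measurable[MeasurableSpace.generateFrom
        {A : Set Ω | ∃ h : MeasurableSet A, chiL0 μ A h ∈ Y}] (⇑f) ∧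
      ∀ r : ℝ, ∃ h : MeasurableSet {ω | r < f ω}, chiL0 μ {ω | r < f ω} h ∈ Y := by
  have hfm : Measurable (⇑f) := f.stronglyMeasurable.measurable
  have key : ∀ r : ℝ, ∃ h : MeasurableSet {ω | r < f ω}, chiL0 μ {ω | r < f ω} h ∈ Y := by
    intro r
    have hA : MeasurableSet {ω | r < f ω} := measurableSet_lt measurable_const hfm
    refine ⟨hA, ?_⟩
    set A := {ω | r < f ω} with hAdef
    set χ : Ω →ₘ[μ] ℝ := chiL0 μ A hA with hχdef
    have hχcoe : ⇑χ =ᵐ[μ] A.indicator (fun _ => (1 : ℝ)) := AEEqFun.coeFn_mk _ _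
    set t : Ω →ₘ[μ] ℝ := (f - r • 1) ⊔ 0 with ht
    have htY : t ∈ Y := sup_memY Y hsub (Y.sub_mem hf (Y.smul_mem r h1)) Y.zero_mem
    set g : ℕ → Ω →ₘ[μ] ℝ := fun n => ((n : ℝ) • t) ⊓ 1 with hgdef
    have hgY : ∀ n, g n ∈ Y := fun n => inf_memY Y hsub (Y.smul_mem _ htY) h1
    have htcoe : ⇑t =ᵐ[μ] fun ω => max (f ω - r) 0 := by
      filter_upwards [AEEqFun.coeFn_sup (f - r • 1) 0, AEEqFun.coeFn_sub f (r • 1),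
        AEEqFun.coeFn_smul r (1 : Ω →ₘ[μ] ℝ), AEEqFun.coeFn_zero (β := ℝ),
        AEEqFun.coeFn_one (β := ℝ)] with ω e1 e2 e3 e4 e5
      rw [ht]
      rw [e1, e2, Pi.sub_apply, e3, Pi.smul_apply, e4, Pi.zero_apply, e5, Pi.one_apply,
        smul_eq_mul, mul_one]
    have hgcoe : ∀ n : ℕ, ⇑(g n) =ᵐ[μ] fun ω => min ((n : ℝ) * max (f ω - r) 0) 1 := by
      intro n
      filter_upwards [AEEqFun.coeFn_inf ((n : ℝ) • t) 1, AEEqFun.coeFn_smul (n : ℝ) t,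
        htcoe, AEEqFun.coeFn_one (β := ℝ)] with ω e1 e2 e3 e4
      simp only [hgdef]
      rw [e1, e2, Pi.smul_apply, e3, e4, Pi.one_apply, smul_eq_mul]
    -- g n ≤ χ a.e.
    have hgχae : ∀ n : ℕ, ∀ᵐ ω ∂μ, (g n) ω ≤ χ ω := by
      intro n
      filter_upwards [hgcoe n, hχcoe] with ω e1 e2
      rw [e1, e2]
      by_cases hω : ω ∈ A
      · rw [Set.indicator_of_mem hω]; exact min_le_right _ _
      · rw [Set.indicator_of_notMem hω]
        have hfr : f ω ≤ r := not_lt.1 hω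
        rw [max_eq_right (by linarith), mul_zero]
        simp
    have hgχ : ∀ n, g n ≤ χ := fun n => AEEqFun.coeFn_le.1 (hgχae n)
    have hgmono : Monotone g := by
      intro n m hnm
      rw [← AEEqFun.coeFn_le]
      filter_upwards [hgcoe n, hgcoe m] with ω e1 e2
      rw [e1, e2]
      exact min_le_min (mul_le_mul_of_nonneg_right (by exact_mod_cast hnm) (le_max_right _ _))
        le_rfl
    -- χ ∈ X
    have hχX : χ ∈ X := by
      refine hX χ 1 ?_ (hYX h1)
      rw [← AEEqFun.coeFn_le]
      filter_upwards [AEEqFun.coeFn_abs χ, AEEqFun.coeFn_abs (1 : Ω →ₘ[μ] ℝ), hχcoe,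
        AEEqFun.coeFn_one (β := ℝ)] with ω e1 e2 e3 e4
      rw [e1, e2, e3, e4, Pi.one_apply, abs_one]
      by_cases hω : ω ∈ A
      · rw [Set.indicator_of_mem hω]; simp
      · rw [Set.indicator_of_notMem hω]; simp
    refine hclosed (ULift.{u} ℕ) inferInstance inferInstance ⟨⟨0⟩⟩ (fun n => g n.down) χ
      (fun n => hgY n.down) hχX
      ⟨fun n => χ - g n.down, fun n => X.sub_mem hχX (hYX (hgY n.down)), ?_, ?_, ?_, ?_⟩
    · intro n m hnm
      rw [← AEEqFun.coeFn_le]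
      filter_upwards [AEEqFun.coeFn_sub χ (g n.down), AEEqFun.coeFn_sub χ (g m.down),
        AEEqFun.coeFn_le.2 (hgmono (show n.down ≤ m.down from hnm))] with ω e1 e2 e3
      rw [e1, e2, Pi.sub_apply, Pi.sub_apply]
      have := e3
      simp only [Pi.sub_apply] at *
      linarith [e3]
    · intro n
      rw [← AEEqFun.coeFn_le]
      filter_upwards [AEEqFun.coeFn_sub χ (g n.down), hgχae n.down,
        AEEqFun.coeFn_zero (β := ℝ)] with ω e1 e2 e3
      rw [e3, Pi.zero_apply, e1, Pi.sub_apply]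
      linarith
    · intro h hh hle
      rw [← AEEqFun.coeFn_le]
      have hle' : ∀ n : ℕ, ∀ᵐ ω ∂μ, h ω ≤ χ ω - (g n) ω := by
        intro n
        have := AEEqFun.coeFn_le.2 (hle ⟨n⟩)
        filter_upwards [this, AEEqFun.coeFn_sub χ (g n)] with ω e1 e2
        rw [e2, Pi.sub_apply] at e1; exact e1
      have hall : ∀ᵐ ω ∂μ, ∀ n : ℕ, h ω ≤ χ ω - (g n) ω := ae_all_iff.2 hle'
      have hallg : ∀ᵐ ω ∂μ, ∀ n : ℕ, (g n) ω = min ((n : ℝ) * max (f ω - r) 0) 1 :=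
        ae_all_iff.2 fun n => hgcoe n
      filter_upwards [hall, hallg, hχcoe, AEEqFun.coeFn_zero (β := ℝ)] with ω e1 e2 e3 e0
      rw [e0, Pi.zero_apply]
      by_cases hω : ω ∈ A
      · have hfr : (0 : ℝ) < f ω - r := by
          have : r < f ω := hω
          linarith
        obtain ⟨n, hn⟩ := exists_nat_ge ((f ω - r)⁻¹)
        have hn1 : (1 : ℝ) ≤ (n : ℝ) * max (f ω - r) 0 := by
          rw [max_eq_left hfr.le]
          calc (1 : ℝ) = (f ω - r)⁻¹ * (f ω - r) := by field_simp
          _ ≤ (n : ℝ) * (f ω - r) := by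
              apply mul_le_mul_of_nonneg_right hn hfr.le
        have := e1 n
        rw [e2 n, e3, Set.indicator_of_mem hω, min_eq_right hn1] at this
        linarith
      · have := e1 0
        rw [e2 0, e3, Set.indicator_of_notMem hω] at this
        simpa using this
    · refine Eventually.of_forall fun n => ?_
      rw [← AEEqFun.coeFn_le]
      filter_upwards [AEEqFun.coeFn_abs (g n.down - χ), AEEqFun.coeFn_sub (g n.down) χ,
        AEEqFun.coeFn_sub χ (g n.down), hgχae n.down] with ω e1 e2 e3 e4
      rw [e1, e2, e3, Pi.sub_apply, Pi.sub_apply, abs_of_nonpos (by linarith)]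
      linarith
  refine ⟨?_, key⟩
  letI mG : MeasurableSpace Ω := MeasurableSpace.generateFrom
    {A : Set Ω | ∃ h : MeasurableSet A, chiL0 μ A h ∈ Y}
  apply measurable_of_Ioi (α := ℝ)
  intro r
  have : (⇑f) ⁻¹' (Set.Ioi r) = {ω | r < f ω} := rfl
  rw [this]
  exact MeasurableSpace.measurableSet_generateFrom ⟨(key r).1, (key r).2⟩
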